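/- Let φ be a 3-CNF formula with m ≥ 1 clauses over a finite type P of propositional variables, and let A_φ and R_φ be the ABox and the full ground rule set of the CNF encoding. Then φ is unsatisfiable (no interpretation I : P → Bool satisfies φ) if and only if S(m) belongs to every optimal censor for A_φ and R_φ (equivalently, S(m) belongs to the intersection of all optimal censors, i.e., S(m) is IGA-entailed by the encoded instance). -/
import Mathlib


/-- A ground rule: a finite body and a family of finite head images. -/
structure GroundRule (α : Type*) where
  body : Finset α
  heads : Set (Finset α)

/-- A set of atoms `C` satisfies a ground rule `(B, Q)` if `B ⊆ C` implies
that `I ⊆ C` for some `I ∈ Q`. -/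
def RuleSat {α : Type*} (C : Set α) (r : GroundRule α) : Prop :=
  ↑r.body ⊆ C → ∃ I ∈ r.heads, ↑I ⊆ C

/-- `C` satisfies a set of ground rules if it satisfies every rule in it. -/
def SatisfiesSet {α : Type*} (C : Set α) (R : Set (GroundRule α)) : Prop :=
  ∀ r ∈ R, RuleSat C r

/-- A censor for an ambient set `A` and rules `R` is a subset of `A` satisfying `R`. -/
def Censor {α : Type*} (A : Set α) (R : Set (GroundRule α)) (C : Set α) : Prop :=
  C ⊆ A ∧ SatisfiesSet C R

/-- An optimal censor is a censor that is maximal w.r.t. set inclusion. -/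
def OptimalCensor {α : Type*} (A : Set α) (R : Set (GroundRule α)) (C : Set α) : Prop :=
  Censor A R C ∧ ∀ C', Censor A R C' → C ⊆ C' → C' = C

/-- The atoms of the CNF encoding. -/
inductive Atom (P : Type) : Type where
  | S : ℕ → Atom P
  | N : ℕ → ℕ → Atom P
  | V : Fin 3 → ℕ → P → Atom P
  | Pl : Fin 3 → ℕ → Bool → Atom P
  | T : P → Bool → Atom P
  | U : Atom P
  deriving DecidableEq

/-- `I` satisfies the 3-CNF `φ` (clauses indexed `1..m` via `Fin m`):
every clause has some literal `(p, v)` with `I p = v`. -/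
def SatCNF {P : Type} {m : ℕ} (I : P → Bool) (φ : Fin m → Fin 3 → P × Bool) : Prop :=
  ∀ i : Fin m, ∃ j : Fin 3, I (φ i j).1 = (φ i j).2

/-- The ABox `A_φ` of the CNF encoding (the `i`-th clause, `i : Fin m`,
has index `i.val + 1` in `1..m`). -/
def abox {P : Type} {m : ℕ} (φ : Fin m → Fin 3 → P × Bool) : Set (Atom P) :=
  {a | ∃ i : Fin m, a = Atom.N i.val (i.val + 1)} ∪
  {a | ∃ (i : Fin m) (j : Fin 3), a = Atom.V j (i.val + 1) (φ i j).1} ∪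
  {a | ∃ (i : Fin m) (j : Fin 3), a = Atom.Pl j (i.val + 1) (φ i j).2} ∪
  {a | ∃ (p : P) (b : Bool), a = Atom.T p b} ∪
  {a | ∃ i : Fin m, a = Atom.S (i.val + 1)}

/-- The full ground rule set `R_φ` of the CNF encoding. -/
def rules (P : Type) [DecidableEq P] (m : ℕ) : Set (GroundRule (Atom P)) :=
  {r | ∃ (j : Fin 3) (i : Fin m) (p : P) (v : Bool),
    r = ⟨({Atom.S (i.val + 1), Atom.N i.val (i.val + 1), Atom.V j (i.val + 1) p,
           Atom.Pl j (i.val + 1) v, Atom.T p v} : Finset (Atom P)),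
         {({Atom.S i.val} : Finset (Atom P))}⟩} ∪
  {r | ∃ p : P,
    r = ⟨({Atom.T p true, Atom.T p false} : Finset (Atom P)),
         {({Atom.U} : Finset (Atom P))}⟩}

/-- The candidate censor `A'_I` built from an interpretation `I`:
remove from `A_φ` all `T(p, v)` with `v ≠ I p` and all `S(i)` with `1 ≤ i ≤ m`. -/
def aboxOf {P : Type} {m : ℕ} (φ : Fin m → Fin 3 → P × Bool) (I : P → Bool) :
    Set (Atom P) :=
  abox φ \ ({a | ∃ (p : P) (v : Bool), v ≠ I p ∧ a = Atom.T p v} ∪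
            {a | ∃ i : Fin m, a = Atom.S (i.val + 1)})

set_option linter.unusedSectionVars false

section Aux

variable {P : Type} [DecidableEq P] {m : ℕ} (φ : Fin m → Fin 3 → P × Bool)

lemma U_not_mem : (Atom.U : Atom P) ∉ abox φ := by
  simp [abox]

lemma S0_not_mem : (Atom.S 0 : Atom P) ∉ abox φ := by
  simp [abox]

lemma N_in (i : Fin m) : Atom.N i.val (i.val + 1) ∈ abox φ := by
  simp [abox]

lemma V_in (i : Fin m) (j : Fin 3) : Atom.V j (i.val + 1) (φ i j).1 ∈ abox φ := by
  simp only [abox, Set.mem_union, Set.mem_setOf_eq]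
  exact Or.inl (Or.inl (Or.inl (Or.inr ⟨i, j, rfl⟩)))

lemma Pl_in (i : Fin m) (j : Fin 3) : Atom.Pl j (i.val + 1) (φ i j).2 ∈ abox φ := by
  simp only [abox, Set.mem_union, Set.mem_setOf_eq]
  exact Or.inl (Or.inl (Or.inr ⟨i, j, rfl⟩))

lemma T_in (p : P) (b : Bool) : Atom.T p b ∈ abox φ := by
  simp only [abox, Set.mem_union, Set.mem_setOf_eq]
  exact Or.inl (Or.inr ⟨p, b, rfl⟩)

lemma S_in (i : Fin m) : (Atom.S (i.val + 1) : Atom P) ∈ abox φ := by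
  simp only [abox, Set.mem_union, Set.mem_setOf_eq]
  exact Or.inr ⟨i, rfl⟩

lemma V_mem {j : Fin 3} {k : ℕ} {p : P} (h : Atom.V j k p ∈ abox φ) :
    ∃ i : Fin m, i.val + 1 = k ∧ (φ i j).1 = p := by
  simp only [abox, Set.mem_union, Set.mem_setOf_eq] at h
  rcases h with ((((⟨i, hi⟩ | ⟨i, j', hi⟩) | ⟨i, j', hi⟩) | ⟨q, b, hq⟩) | ⟨i, hi⟩) <;>
    simp_all
  obtain ⟨rfl, rfl, rfl⟩ := hi
  exact ⟨i, rfl, rfl⟩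

lemma Pl_mem {j : Fin 3} {k : ℕ} {v : Bool} (h : Atom.Pl j k v ∈ abox φ) :
    ∃ i : Fin m, i.val + 1 = k ∧ (φ i j).2 = v := by
  simp only [abox, Set.mem_union, Set.mem_setOf_eq] at h
  rcases h with ((((⟨i, hi⟩ | ⟨i, j', hi⟩) | ⟨i, j', hi⟩) | ⟨q, b, hq⟩) | ⟨i, hi⟩) <;>
    simp_all
  obtain ⟨rfl, rfl, rfl⟩ := hi
  exact ⟨i, rfl, rfl⟩

lemma S_mem {k : ℕ} (h : (Atom.S k : Atom P) ∈ abox φ) :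
    ∃ i : Fin m, i.val + 1 = k := by
  simp only [abox, Set.mem_union, Set.mem_setOf_eq] at h
  rcases h with ((((⟨i, hi⟩ | ⟨i, j', hi⟩) | ⟨i, j', hi⟩) | ⟨q, b, hq⟩) | ⟨i, hi⟩) <;>
    simp_all

lemma rule1_mem (j : Fin 3) (i : Fin m) (p : P) (v : Bool) :
    (⟨({Atom.S (i.val + 1), Atom.N i.val (i.val + 1), Atom.V j (i.val + 1) p,
        Atom.Pl j (i.val + 1) v, Atom.T p v} : Finset (Atom P)),
      {({Atom.S i.val} : Finset (Atom P))}⟩ : GroundRule (Atom P)) ∈ rules P m :=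
  Or.inl ⟨j, i, p, v, rfl⟩

lemma denial_mem (p : P) :
    (⟨({Atom.T p true, Atom.T p false} : Finset (Atom P)),
      {({Atom.U} : Finset (Atom P))}⟩ : GroundRule (Atom P)) ∈ rules P m :=
  Or.inr ⟨p, rfl⟩

lemma sat_rule1 {C : Set (Atom P)} (h : SatisfiesSet C (rules P m))
    (j : Fin 3) (i : Fin m) (p : P) (v : Bool)
    (h1 : (Atom.S (i.val + 1) : Atom P) ∈ C) (h2 : Atom.N i.val (i.val + 1) ∈ C)
    (h3 : Atom.V j (i.val + 1) p ∈ C) (h4 : Atom.Pl j (i.val + 1) v ∈ C)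
    (h5 : Atom.T p v ∈ C) : (Atom.S i.val : Atom P) ∈ C := by
  have hb : ↑({Atom.S (i.val + 1), Atom.N i.val (i.val + 1), Atom.V j (i.val + 1) p,
        Atom.Pl j (i.val + 1) v, Atom.T p v} : Finset (Atom P)) ⊆ C := by
    intro x hx
    simp only [Finset.coe_insert, Set.mem_insert_iff, Finset.coe_singleton,
      Set.mem_singleton_iff] at hx
    rcases hx with rfl | rfl | rfl | rfl | rfl <;> assumption
  obtain ⟨I, hI, hsub⟩ := h _ (rule1_mem j i p v) hb
  simp only [Set.mem_singleton_iff] at hI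
  subst hI
  simpa using hsub

lemma sat_denial {C : Set (Atom P)} (hCA : C ⊆ abox φ)
    (h : SatisfiesSet C (rules P m)) (p : P) :
    Atom.T p true ∉ C ∨ Atom.T p false ∉ C := by
  by_contra hcon
  push_neg at hcon
  have hb : ↑({Atom.T p true, Atom.T p false} : Finset (Atom P)) ⊆ C := by
    intro x hx
    simp only [Finset.coe_insert, Set.mem_insert_iff, Finset.coe_singleton,
      Set.mem_singleton_iff] at hx
    rcases hx with rfl | rfl
    · exact hcon.1
    · exact hcon.2
  obtain ⟨I, hI, hsub⟩ := h _ (denial_mem p) hb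
  simp only [Set.mem_singleton_iff] at hI
  subst hI
  exact U_not_mem φ (hCA (by simpa using hsub))

/-- Descent: if `C` is optimal and `S(i+1) ∉ C`, then `S i ∉ C` and some literal
of clause `i` has its `T`-atom in `C`. -/
lemma descent {C : Set (Atom P)} (hopt : OptimalCensor (abox φ) (rules P m) C)
    (i : Fin m) (hS : (Atom.S (i.val + 1) : Atom P) ∉ C) :
    (Atom.S i.val : Atom P) ∉ C ∧ ∃ j : Fin 3, Atom.T (φ i j).1 (φ i j).2 ∈ C := by
  obtain ⟨⟨hCA, hsat⟩, hmax⟩ := hopt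
  have hC'A : insert (Atom.S (i.val + 1) : Atom P) C ⊆ abox φ := by
    intro x hx
    rcases hx with rfl | hx
    · exact S_in φ i
    · exact hCA hx
  have hnot : ¬ SatisfiesSet (insert (Atom.S (i.val + 1) : Atom P) C) (rules P m) := by
    intro hsat'
    have := hmax _ ⟨hC'A, hsat'⟩ (Set.subset_insert _ _)
    exact hS (this ▸ Set.mem_insert _ C)
  rw [SatisfiesSet] at hnot
  push_neg at hnot
  obtain ⟨r, hr, hbody, hhead⟩ := by
    simpa only [RuleSat, not_forall, not_exists, not_and] using hnot
  rcases hr with ⟨j, i', p, v, rfl⟩ | ⟨p, rfl⟩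
  · -- a rule of the first kind is violated
    simp only [Finset.coe_insert, Set.insert_subset_iff, Finset.coe_singleton,
      Set.singleton_subset_iff] at hbody
    obtain ⟨hb1, hb2, hb3, hb4, hb5⟩ := hbody
    have hhead' : (Atom.S i'.val : Atom P) ∉ insert (Atom.S (i.val + 1)) C := by
      intro hmem
      exact hhead _ rfl (by simpa using hmem)
    have hb2' : Atom.N i'.val (i'.val + 1) ∈ C := by
      rcases hb2 with h | h
      · exact absurd h (by simp)
      · exact h
    have hb3' : Atom.V j (i'.val + 1) p ∈ C := by
      rcases hb3 with h | h
      · exact absurd h (by simp)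
      · exact h
    have hb4' : Atom.Pl j (i'.val + 1) v ∈ C := by
      rcases hb4 with h | h
      · exact absurd h (by simp)
      · exact h
    have hb5' : Atom.T p v ∈ C := by
      rcases hb5 with h | h
      · exact absurd h (by simp)
      · exact h
    have hi' : i' = i := by
      rcases hb1 with h | h
      · simp only [Atom.S.injEq] at h
        exact Fin.ext (by omega)
      · exact absurd (sat_rule1 hsat j i' p v h hb2' hb3' hb4' hb5')
          (fun hc => hhead' (Set.mem_insert_of_mem _ hc))
    rw [hi'] at hb3' hb4' hhead'
    obtain ⟨i2, hi2, hp⟩ := V_mem φ (hCA hb3')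
    have hi2' : i2 = i := Fin.ext (by omega)
    rw [hi2'] at hp
    obtain ⟨i3, hi3, hv⟩ := Pl_mem φ (hCA hb4')
    have hi3' : i3 = i := Fin.ext (by omega)
    rw [hi3'] at hv
    refine ⟨fun hc => hhead' (Set.mem_insert_of_mem _ hc), j, ?_⟩
    rw [hp, hv]
    exact hb5'
  · -- the denial rules cannot be the violated ones
    exfalso
    simp only [Finset.coe_insert, Set.insert_subset_iff, Finset.coe_singleton,
      Set.singleton_subset_iff] at hbody
    have h1 : Atom.T p true ∈ C := by
      rcases hbody.1 with h | h
      · exact absurd h (by simp)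
      · exact h
    have h2 : Atom.T p false ∈ C := by
      rcases hbody.2 with h | h
      · exact absurd h (by simp)
      · exact h
    rcases sat_denial φ hCA hsat p with h | h
    · exact h h1
    · exact h h2

lemma chain {C : Set (Atom P)} (hopt : OptimalCensor (abox φ) (rules P m) C) :
    ∀ k, k ≤ m → (Atom.S k : Atom P) ∉ C →
      ∀ i : Fin m, i.val < k → ∃ j : Fin 3, Atom.T (φ i j).1 (φ i j).2 ∈ C := by
  intro k
  induction k with
  | zero => intro _ _ i h; omega
  | succ n ih =>
    intro hle hS i hlt
    have hn : n < m := by omega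
    obtain ⟨hS', j, hT⟩ := descent φ hopt ⟨n, hn⟩ hS
    rcases Nat.lt_succ_iff_lt_or_eq.mp hlt with h | h
    · exact ih (by omega) hS' i h
    · have : i = ⟨n, hn⟩ := Fin.ext h
      subst this
      exact ⟨j, hT⟩

/-- `aboxOf φ I` is always a censor. -/
lemma aboxOf_censor (I : P → Bool) : Censor (abox φ) (rules P m) (aboxOf φ I) := by
  refine ⟨Set.diff_subset, ?_⟩
  intro r hr
  rcases hr with ⟨j, i, p, v, rfl⟩ | ⟨p, rfl⟩
  · intro hbody
    exfalso
    have hS : (Atom.S (i.val + 1) : Atom P) ∈ aboxOf φ I :=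
      hbody (by simp)
    exact hS.2 (Or.inr ⟨i, rfl⟩)
  · intro hbody
    exfalso
    have hT : (Atom.T p (!(I p)) : Atom P) ∈ aboxOf φ I := by
      apply hbody
      cases I p <;> simp
    exact hT.2 (Or.inl ⟨p, !(I p), by simp, rfl⟩)

/-- No censor extending `aboxOf φ I` contains any `S`-atom, when `I` satisfies `φ`. -/
lemma no_S {I : P → Bool} (hI : SatCNF I φ) {C' : Set (Atom P)}
    (hc : Censor (abox φ) (rules P m) C') (hsub : aboxOf φ I ⊆ C') :
    ∀ k, (Atom.S k : Atom P) ∉ C' := by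
  intro k
  induction k using Nat.strong_induction_on with
  | _ k ihk =>
    intro hk
    obtain ⟨i, hi⟩ := S_mem φ (hc.1 hk)
    obtain ⟨j, hj⟩ := hI i
    have hN : Atom.N i.val (i.val + 1) ∈ C' :=
      hsub ⟨N_in φ i, by simp [Atom.N.injEq]⟩
    have hV : Atom.V j (i.val + 1) (φ i j).1 ∈ C' :=
      hsub ⟨V_in φ i j, by simp⟩
    have hPl : Atom.Pl j (i.val + 1) (φ i j).2 ∈ C' :=
      hsub ⟨Pl_in φ i j, by simp⟩
    have hT : Atom.T (φ i j).1 (φ i j).2 ∈ C' := by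
      apply hsub
      refine ⟨T_in φ _ _, ?_⟩
      simp only [Set.mem_union, Set.mem_setOf_eq, not_or, not_exists]
      constructor
      · rintro p v ⟨hne, heq⟩
        simp only [Atom.T.injEq] at heq
        obtain ⟨rfl, rfl⟩ := heq
        exact hne hj.symm
      · simp
    have hSk : (Atom.S (i.val + 1) : Atom P) ∈ C' := hi ▸ hk
    have := sat_rule1 hc.2 j i (φ i j).1 (φ i j).2 hSk hN hV hPl hT
    exact ihk i.val (by omega) this

/-- When `I` satisfies `φ`, `aboxOf φ I` is an optimal censor. -/
lemma aboxOf_optimal {I : P → Bool} (hI : SatCNF I φ) :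
    OptimalCensor (abox φ) (rules P m) (aboxOf φ I) := by
  refine ⟨aboxOf_censor φ I, ?_⟩
  intro C' hc hsub
  refine Set.Subset.antisymm ?_ hsub
  intro x hx
  refine ⟨hc.1 hx, ?_⟩
  rintro (⟨p, v, hne, rfl⟩ | ⟨i, rfl⟩)
  · -- x = T p v with v ≠ I p
    have hTip : (Atom.T p (I p) : Atom P) ∈ C' := by
      apply hsub
      refine ⟨T_in φ _ _, ?_⟩
      simp only [Set.mem_union, Set.mem_setOf_eq, not_or, not_exists]
      constructor
      · rintro q w ⟨hne', heq⟩
        simp only [Atom.T.injEq] at heq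
        obtain ⟨rfl, rfl⟩ := heq
        exact hne' rfl
      · simp
    have hboth : Atom.T p true ∈ C' ∧ Atom.T p false ∈ C' := by
      cases hv : I p <;> cases hw : v <;> simp_all
    rcases sat_denial φ hc.1 hc.2 p with h | h
    · exact h hboth.1
    · exact h hboth.2
  · exact no_S φ hI hc hsub _ hx

end Aux

/-- `φ` is unsatisfiable iff `S(m)` belongs to every optimal
censor for `A_φ` and `R_φ` (i.e. `S(m)` is IGA-entailed). -/
theorem stmt11 {P : Type} [Fintype P] [DecidableEq P] {m : ℕ} (hm : 1 ≤ m)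
    (φ : Fin m → Fin 3 → P × Bool) :
    (¬ ∃ I : P → Bool, SatCNF I φ) ↔
      ∀ C, OptimalCensor (abox φ) (rules P m) C → Atom.S m ∈ C := by
  classical
  constructor
  · intro hunsat C hopt
    by_contra hS
    -- descend from S m using the chain lemma and build a satisfying assignment
    have hchain := chain φ hopt m le_rfl hS
    apply hunsat
    refine ⟨fun p => if Atom.T p true ∈ C then true else false, ?_⟩
    intro i
    obtain ⟨j, hT⟩ := hchain i i.isLt
    refine ⟨j, ?_⟩
    cases hv : (φ i j).2 with
    | true =>
      rw [hv] at hT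
      simp [hT]
    | false =>
      rw [hv] at hT
      have : Atom.T (φ i j).1 true ∉ C := by
        rcases sat_denial φ hopt.1.1 hopt.1.2 (φ i j).1 with h | h
        · exact h
        · exact absurd hT h
      simp [this]
  · intro h ⟨I, hI⟩
    have hopt := aboxOf_optimal φ hI
    have hmem := h _ hopt
    have : (Atom.S m : Atom P) ∉ aboxOf φ I := by
      intro hc
      refine hc.2 (Or.inr ⟨⟨m - 1, by omega⟩, ?_⟩)
      simp only [Atom.S.injEq]
      omega
    exact this hmem
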